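/- For c ∈ ℝ let P'(c) = {y ∈ ℝ⁴ : −y₁−y₂−2y₄ ≤ 1/2, y₁−2y₄ ≤ 1/2, y₂−2y₄ ≤ 1/2, −y₃+3y₄ ≤ c, y₃+3y₄ ≤ c, 6y₄ ≤ 1/2, −6y₄ ≤ 1/2}. Then for every c ∈ (1/4, 3/4): P'(c) is a compact convex set with nonempty interior, its Lebesgue volume is ∫_{P'(c)} dy = (56c − 3)/144, the fourth moment is ∫_{P'(c)} y₄ dy = (5c − 2)/720, and ∫_{P'(c)} y_j dy = 0 for j = 1, 2, 3. -/

import Mathlib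

open MeasureTheory

open Set

/-- The polytope `P'(c) ⊆ ℝ⁴` of the divisor `D(c)` after the linear change of
coordinates used in the paper. -/
def Pprime (c : ℝ) : Set (EuclideanSpace ℝ (Fin 4)) :=
  {y | -y 0 - y 1 - 2 * y 3 ≤ 1/2 ∧ y 0 - 2 * y 3 ≤ 1/2 ∧ y 1 - 2 * y 3 ≤ 1/2 ∧
       -y 2 + 3 * y 3 ≤ c ∧ y 2 + 3 * y 3 ≤ c ∧
       6 * y 3 ≤ 1/2 ∧ -(6 * y 3) ≤ 1/2}

def Ttri (t : ℝ) : Set (ℝ × ℝ) :=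
  {v | -2*(2*t+1/2) ≤ v.1 ∧ v.1 ≤ 2*t+1/2 ∧ -(2*t+1/2) - v.1 ≤ v.2 ∧ v.2 ≤ 2*t+1/2}

def S2 (c t : ℝ) : Set (ℝ × (ℝ × ℝ)) :=
  {w | 3*t - c ≤ w.1 ∧ w.1 ≤ c - 3*t ∧ w.2 ∈ Ttri t}

def Sset (c : ℝ) : Set (ℝ × (ℝ × (ℝ × ℝ))) :=
  {p | -(1/12) ≤ p.1 ∧ p.1 ≤ 1/12 ∧ p.2 ∈ S2 c p.1}

lemma isClosed_Ttri (t : ℝ) : IsClosed (Ttri t) := by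
  have h : Ttri t = {v : ℝ × ℝ | -2*(2*t+1/2) ≤ v.1} ∩ ({v | v.1 ≤ 2*t+1/2} ∩
      ({v | -(2*t+1/2) - v.1 ≤ v.2} ∩ {v | v.2 ≤ 2*t+1/2})) := rfl
  rw [h]
  repeat' apply IsClosed.inter
  all_goals apply isClosed_le <;> fun_prop

lemma isCompact_Ttri (t : ℝ) : IsCompact (Ttri t) := by
  apply Metric.isCompact_of_isClosed_isBounded (isClosed_Ttri t)
  apply Bornology.IsBounded.subset
    ((Metric.isBounded_Icc (-2*(2*t+1/2)) (2*t+1/2)).prod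
      (Metric.isBounded_Icc (-2*(2*t+1/2)) (2*t+1/2)))
  rintro ⟨x, y⟩ ⟨h1, h2, h3, h4⟩
  exact ⟨mem_Icc.2 ⟨h1, h2⟩, mem_Icc.2 ⟨by linarith, h4⟩⟩

lemma isClosed_S2 (c t : ℝ) : IsClosed (S2 c t) := by
  have h : S2 c t = {w : ℝ × (ℝ × ℝ) | 3*t - c ≤ w.1} ∩ ({w | w.1 ≤ c - 3*t} ∩
      Prod.snd ⁻¹' Ttri t) := rfl
  rw [h]
  exact (isClosed_le (by fun_prop) (by fun_prop)).inter
    ((isClosed_le (by fun_prop) (by fun_prop)).inter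
      ((isClosed_Ttri t).preimage continuous_snd))

lemma isCompact_S2 (c t : ℝ) : IsCompact (S2 c t) := by
  apply Metric.isCompact_of_isClosed_isBounded (isClosed_S2 c t)
  apply Bornology.IsBounded.subset
    ((Metric.isBounded_Icc (3*t-c) (c-3*t)).prod
      ((Metric.isBounded_Icc (-2*(2*t+1/2)) (2*t+1/2)).prod
        (Metric.isBounded_Icc (-2*(2*t+1/2)) (2*t+1/2))))
  rintro ⟨z, x, y⟩ ⟨h0, h0', h1, h2, h3, h4⟩
  exact ⟨mem_Icc.2 ⟨h0, h0'⟩, mem_Icc.2 ⟨h1, h2⟩, mem_Icc.2 ⟨by linarith, h4⟩⟩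

lemma isClosed_Sset (c : ℝ) : IsClosed (Sset c) := by
  have h : Sset c = {p : ℝ × (ℝ × (ℝ × ℝ)) | -(1/12) ≤ p.1} ∩ ({p | p.1 ≤ 1/12} ∩
      ({p | 3*p.1 - c ≤ p.2.1} ∩ ({p | p.2.1 ≤ c - 3*p.1} ∩
      ({p | -2*(2*p.1+1/2) ≤ p.2.2.1} ∩ ({p | p.2.2.1 ≤ 2*p.1+1/2} ∩
      ({p | -(2*p.1+1/2) - p.2.2.1 ≤ p.2.2.2} ∩ {p | p.2.2.2 ≤ 2*p.1+1/2})))))) := rfl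
  rw [h]
  repeat' apply IsClosed.inter
  all_goals apply isClosed_le <;> fun_prop

lemma isCompact_Sset (c : ℝ) : IsCompact (Sset c) := by
  apply Metric.isCompact_of_isClosed_isBounded (isClosed_Sset c)
  apply Bornology.IsBounded.subset
    ((Metric.isBounded_Icc (-(1/12)) (1/12)).prod
      ((Metric.isBounded_Icc (-c-1/4) (c+1/4)).prod
        ((Metric.isBounded_Icc (-4/3) (2/3)).prod (Metric.isBounded_Icc (-4/3) (2/3)))))
  rintro ⟨t, z, x, y⟩ ⟨h1, h2, h3, h4, h5, h6, h7, h8⟩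
  exact ⟨mem_Icc.2 ⟨h1, h2⟩, mem_Icc.2 ⟨by linarith, by linarith⟩,
    mem_Icc.2 ⟨by linarith, by linarith⟩, mem_Icc.2 ⟨by linarith, by linarith⟩⟩

lemma fubini_slice {β : Type*} [MeasureSpace β] [SigmaFinite (volume : Measure β)]
    (U : Set (ℝ × β)) (hU : MeasurableSet U) (A : Set ℝ) (hA : MeasurableSet A)
    (V : ℝ → Set β) (hV : ∀ t, MeasurableSet (V t))
    (hmem : ∀ t w, (t, w) ∈ U ↔ t ∈ A ∧ w ∈ V t)
    (G : ℝ × β → ℝ) (hG : Integrable (U.indicator G)) :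
    ∫ p in U, G p = ∫ t in A, ∫ w in V t, G (t, w) := by
  have hG' : Integrable (U.indicator G) ((volume : Measure ℝ).prod (volume : Measure β)) := by
    rwa [Measure.volume_eq_prod _ _] at hG
  calc ∫ p in U, G p = ∫ p, U.indicator G p := (integral_indicator hU).symm
    _ = ∫ p, U.indicator G p ∂((volume : Measure ℝ).prod volume) := by rw [← Measure.volume_eq_prod _ _]
    _ = ∫ t, ∫ w, U.indicator G (t, w) := integral_prod _ hG'
    _ = ∫ t, A.indicator (fun t => ∫ w in V t, G (t, w)) t := by
        congr 1; funext t
        by_cases ht : t ∈ A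
        · rw [indicator_of_mem ht, ← integral_indicator (hV t)]
          congr 1; funext w
          by_cases hw : w ∈ V t
          · rw [indicator_of_mem hw, indicator_of_mem ((hmem t w).2 ⟨ht, hw⟩)]
          · rw [indicator_of_notMem hw,
              indicator_of_notMem (fun h => hw ((hmem t w).1 h).2)]
        · rw [indicator_of_notMem ht]
          have hz : ∀ w, U.indicator G (t, w) = 0 :=
            fun w => indicator_of_notMem (fun h => ht ((hmem t w).1 h).1) _
          simp [hz]
    _ = ∫ t in A, ∫ w in V t, G (t, w) := integral_indicator hA

lemma reduce (c : ℝ) (F : ℝ × (ℝ × (ℝ × ℝ)) → ℝ) (hF : Continuous F) :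
    ∫ p in Sset c, F p
      = ∫ t in Icc (-(1/12) : ℝ) (1/12), ∫ z in Icc (3*t - c) (c - 3*t),
          ∫ v in Ttri t, F (t, z, v) := by
  rw [fubini_slice (Sset c) (isClosed_Sset c).measurableSet _ measurableSet_Icc
    (fun t => S2 c t) (fun t => (isClosed_S2 c t).measurableSet)
    (fun t w => by
      constructor
      · rintro ⟨a, b, h⟩; exact ⟨mem_Icc.2 ⟨a, b⟩, h⟩
      · rintro ⟨h, hw⟩; exact ⟨(mem_Icc.1 h).1, (mem_Icc.1 h).2, hw⟩) F
    (((integrable_indicator_iff (isClosed_Sset c).measurableSet)).2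
      (ContinuousOn.integrableOn_compact (isCompact_Sset c) hF.continuousOn))]
  refine setIntegral_congr_fun measurableSet_Icc fun t _ => ?_
  rw [fubini_slice (S2 c t) (isClosed_S2 c t).measurableSet _ measurableSet_Icc
    (fun _ => Ttri t) (fun _ => (isClosed_Ttri t).measurableSet)
    (fun z v => by
      constructor
      · rintro ⟨a, b, h⟩; exact ⟨mem_Icc.2 ⟨a, b⟩, h⟩
      · rintro ⟨h, hw⟩; exact ⟨(mem_Icc.1 h).1, (mem_Icc.1 h).2, hw⟩)
    (fun w => F (t, w))
    (((integrable_indicator_iff (isClosed_S2 c t).measurableSet)).2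
      (ContinuousOn.integrableOn_compact (isCompact_S2 c t)
        (hF.comp (by fun_prop)).continuousOn))]

lemma fubiniT (t : ℝ) (G : ℝ × ℝ → ℝ) (hG : Continuous G) :
    ∫ v in Ttri t, G v
      = ∫ x in Icc (-2*(2*t+1/2)) (2*t+1/2), ∫ y in Icc (-(2*t+1/2) - x) (2*t+1/2), G (x, y) := by
  rw [fubini_slice (Ttri t) (isClosed_Ttri t).measurableSet
    (Icc (-2*(2*t+1/2)) (2*t+1/2)) measurableSet_Icc
    (fun x => Icc (-(2*t+1/2) - x) (2*t+1/2)) (fun _ => measurableSet_Icc)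
    (fun x y => by
      constructor
      · rintro ⟨a, b, h3, h4⟩; exact ⟨mem_Icc.2 ⟨a, b⟩, mem_Icc.2 ⟨h3, h4⟩⟩
      · rintro ⟨hx, hy⟩
        exact ⟨(mem_Icc.1 hx).1, (mem_Icc.1 hx).2, (mem_Icc.1 hy).1, (mem_Icc.1 hy).2⟩) G
    (((integrable_indicator_iff (isClosed_Ttri t).measurableSet)).2
      (ContinuousOn.integrableOn_compact (isCompact_Ttri t) hG.continuousOn))]

lemma intPoly (p q r s u a b : ℝ) :
    ∫ x in a..b, (p + q*x + r*x^2 + s*x^3 + u*x^4)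
      = p*(b-a) + q*(b^2-a^2)/2 + r*(b^3-a^3)/3 + s*(b^4-a^4)/4 + u*(b^5-a^5)/5 := by
  have key : ∀ x ∈ Set.uIcc a b,
      HasDerivAt (fun x => p*x + q*x^2/2 + r*x^3/3 + s*x^4/4 + u*x^5/5)
        (p + q*x + r*x^2 + s*x^3 + u*x^4) x := by
    intro x _
    have h1 : HasDerivAt (fun x : ℝ => x) 1 x := hasDerivAt_id x
    have h2 : HasDerivAt (fun x : ℝ => x^2) (2*x) x := by simpa using hasDerivAt_pow 2 x
    have h3 : HasDerivAt (fun x : ℝ => x^3) (3*x^2) x := by simpa using hasDerivAt_pow 3 x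
    have h4 : HasDerivAt (fun x : ℝ => x^4) (4*x^3) x := by simpa using hasDerivAt_pow 4 x
    have h5 : HasDerivAt (fun x : ℝ => x^5) (5*x^4) x := by simpa using hasDerivAt_pow 5 x
    have := ((((h1.const_mul p).add ((h2.const_mul q).div_const 2)).add
      ((h3.const_mul r).div_const 3)).add ((h4.const_mul s).div_const 4)).add
      ((h5.const_mul u).div_const 5)
    exact this.congr_deriv (by ring)
  rw [intervalIntegral.integral_eq_sub_of_hasDerivAt key
    (Continuous.intervalIntegrable (by fun_prop) a b)]
  ring

lemma icc_eq {l u : ℝ} (h : l ≤ u) (f : ℝ → ℝ) :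
    ∫ y in Set.Icc l u, f y = ∫ y in l..u, f y := by
  rw [integral_Icc_eq_integral_Ioc, ← intervalIntegral.integral_of_le h]

lemma Ttri_one (t : ℝ) (ht : -(1/12) ≤ t) :
    ∫ v in Ttri t, (1:ℝ) = 9*(2*t+1/2)^2/2 := by
  rw [fubiniT t _ continuous_const]
  have step : EqOn (fun x => ∫ y in Icc (-(2*t+1/2) - x) (2*t+1/2), (1:ℝ))
      (fun x => 2*(2*t+1/2) + 1*x + 0*x^2 + 0*x^3 + 0*x^4)
      (Icc (-2*(2*t+1/2)) (2*t+1/2)) := by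
    intro x hx
    have hx1 := (mem_Icc.1 hx).1
    simp only
    rw [icc_eq (by linarith : -(2*t+1/2) - x ≤ 2*t+1/2), intervalIntegral.integral_const,
      smul_eq_mul]
    ring
  rw [setIntegral_congr_fun measurableSet_Icc step,
    icc_eq (by linarith : -2*(2*t+1/2) ≤ 2*t+1/2), intPoly]
  ring

lemma Ttri_x (t : ℝ) (ht : -(1/12) ≤ t) :
    ∫ v in Ttri t, v.1 = 0 := by
  rw [fubiniT t _ (by fun_prop)]
  have step : EqOn (fun x => ∫ y in Icc (-(2*t+1/2) - x) (2*t+1/2), x)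
      (fun x => 0 + (2*(2*t+1/2))*x + 1*x^2 + 0*x^3 + 0*x^4)
      (Icc (-2*(2*t+1/2)) (2*t+1/2)) := by
    intro x hx
    have hx1 := (mem_Icc.1 hx).1
    simp only
    rw [icc_eq (by linarith : -(2*t+1/2) - x ≤ 2*t+1/2), intervalIntegral.integral_const,
      smul_eq_mul]
    ring
  rw [setIntegral_congr_fun measurableSet_Icc step,
    icc_eq (by linarith : -2*(2*t+1/2) ≤ 2*t+1/2), intPoly]
  ring

lemma Ttri_y (t : ℝ) (ht : -(1/12) ≤ t) :
    ∫ v in Ttri t, v.2 = 0 := by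
  rw [fubiniT t _ (by fun_prop)]
  have step : EqOn (fun x => ∫ y in Icc (-(2*t+1/2) - x) (2*t+1/2), y)
      (fun x => 0 + (-(2*t+1/2))*x + (-(1/2))*x^2 + 0*x^3 + 0*x^4)
      (Icc (-2*(2*t+1/2)) (2*t+1/2)) := by
    intro x hx
    have hx1 := (mem_Icc.1 hx).1
    simp only
    rw [icc_eq (by linarith : -(2*t+1/2) - x ≤ 2*t+1/2)]
    rw [show (fun y : ℝ => y) = (fun y : ℝ => 0 + 1*y + 0*y^2 + 0*y^3 + 0*y^4) from
      funext fun y => by ring, intPoly]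
    ring
  rw [setIntegral_congr_fun measurableSet_Icc step,
    icc_eq (by linarith : -2*(2*t+1/2) ≤ 2*t+1/2), intPoly]
  ring
lemma vol_Sset (c : ℝ) (hc : 1/4 < c) :
    ∫ p in Sset c, (1:ℝ) = (56*c - 3)/144 := by
  rw [reduce c _ continuous_const]
  have step1 : EqOn (fun t => ∫ z in Icc (3*t - c) (c - 3*t), ∫ v in Ttri t, (1:ℝ))
      (fun t => 9*c/4 + (18*c - 27/4)*t + (36*c - 54)*t^2 + (-108)*t^3 + 0*t^4)
      (Icc (-(1/12) : ℝ) (1/12)) := by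
    intro t ht
    obtain ⟨ht1, ht2⟩ := mem_Icc.1 ht
    simp only
    rw [Ttri_one t ht1, icc_eq (by linarith : 3*t - c ≤ c - 3*t),
      intervalIntegral.integral_const, smul_eq_mul]
    ring
  rw [setIntegral_congr_fun measurableSet_Icc step1, icc_eq (by norm_num), intPoly]
  norm_num
  ring

lemma momt_Sset (c : ℝ) (hc : 1/4 < c) :
    ∫ p in Sset c, p.1 = (5*c - 2)/720 := by
  rw [reduce c _ (by fun_prop)]
  have step1 : EqOn (fun t => ∫ z in Icc (3*t - c) (c - 3*t), ∫ v in Ttri t, t)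
      (fun t => 0 + (9*c/4)*t + (18*c - 27/4)*t^2 + (36*c - 54)*t^3 + (-108)*t^4)
      (Icc (-(1/12) : ℝ) (1/12)) := by
    intro t ht
    obtain ⟨ht1, ht2⟩ := mem_Icc.1 ht
    have e1 : ∫ v in Ttri t, t = t * (9*(2*t+1/2)^2/2) := by
      calc ∫ v in Ttri t, t = ∫ v in Ttri t, t * 1 := by simp
        _ = t * ∫ v in Ttri t, (1:ℝ) := integral_const_mul t _
        _ = t * (9*(2*t+1/2)^2/2) := by rw [Ttri_one t ht1]
    simp only
    rw [e1, icc_eq (by linarith : 3*t - c ≤ c - 3*t),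
      intervalIntegral.integral_const, smul_eq_mul]
    ring
  rw [setIntegral_congr_fun measurableSet_Icc step1, icc_eq (by norm_num), intPoly]
  norm_num
  ring

lemma momz_Sset (c : ℝ) (hc : 1/4 < c) :
    ∫ p in Sset c, p.2.1 = 0 := by
  rw [reduce c _ (by fun_prop)]
  have step1 : EqOn (fun t => ∫ z in Icc (3*t - c) (c - 3*t), ∫ v in Ttri t, z)
      (fun _ : ℝ => (0:ℝ)) (Icc (-(1/12) : ℝ) (1/12)) := by
    intro t ht
    obtain ⟨ht1, ht2⟩ := mem_Icc.1 ht
    have inner : EqOn (fun z => ∫ v in Ttri t, z)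
        (fun z => 0 + (9*(2*t+1/2)^2/2)*z + 0*z^2 + 0*z^3 + 0*z^4)
        (Icc (3*t - c) (c - 3*t)) := by
      intro z _
      simp only
      calc ∫ v in Ttri t, z = ∫ v in Ttri t, z * 1 := by simp
        _ = z * ∫ v in Ttri t, (1:ℝ) := integral_const_mul z _
        _ = _ := by rw [Ttri_one t ht1]; ring
    simp only
    rw [setIntegral_congr_fun measurableSet_Icc inner,
      icc_eq (by linarith : 3*t - c ≤ c - 3*t), intPoly]
    ring
  rw [setIntegral_congr_fun measurableSet_Icc step1]
  simp

lemma momx_Sset (c : ℝ) (hc : 1/4 < c) :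
    ∫ p in Sset c, p.2.2.1 = 0 := by
  rw [reduce c _ (by fun_prop)]
  have step1 : EqOn (fun t => ∫ z in Icc (3*t - c) (c - 3*t), ∫ v in Ttri t, v.1)
      (fun _ : ℝ => (0:ℝ)) (Icc (-(1/12) : ℝ) (1/12)) := by
    intro t ht
    obtain ⟨ht1, _⟩ := mem_Icc.1 ht
    simp only
    rw [Ttri_x t ht1]
    simp
  rw [setIntegral_congr_fun measurableSet_Icc step1]
  simp

lemma momy_Sset (c : ℝ) (hc : 1/4 < c) :
    ∫ p in Sset c, p.2.2.2 = 0 := by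
  rw [reduce c _ (by fun_prop)]
  have step1 : EqOn (fun t => ∫ z in Icc (3*t - c) (c - 3*t), ∫ v in Ttri t, v.2)
      (fun _ : ℝ => (0:ℝ)) (Icc (-(1/12) : ℝ) (1/12)) := by
    intro t ht
    obtain ⟨ht1, _⟩ := mem_Icc.1 ht
    simp only
    rw [Ttri_y t ht1]
    simp
  rw [setIntegral_congr_fun measurableSet_Icc step1]
  simp
noncomputable def Emap : (ℝ × (ℝ × (ℝ × ℝ))) ≃ᵐ EuclideanSpace ℝ (Fin 4) :=
  (((MeasurableEquiv.refl ℝ).prodCongr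
      ((MeasurableEquiv.refl ℝ).prodCongr (MeasurableEquiv.finTwoArrow (α := ℝ)).symm)).trans
    (((MeasurableEquiv.refl ℝ).prodCongr
        (MeasurableEquiv.piFinSuccAbove (fun _ : Fin 3 => ℝ) 2).symm).trans
      (((MeasurableEquiv.piFinSuccAbove (fun _ : Fin 4 => ℝ) 3).symm).trans
        (MeasurableEquiv.toLp 2 (Fin 4 → ℝ)))))

lemma Emap_zero (p : ℝ × (ℝ × (ℝ × ℝ))) : Emap p 0 = p.2.2.1 := rfl
lemma Emap_one (p : ℝ × (ℝ × (ℝ × ℝ))) : Emap p 1 = p.2.2.2 := rfl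
lemma Emap_two (p : ℝ × (ℝ × (ℝ × ℝ))) : Emap p 2 = p.2.1 := rfl
lemma Emap_three (p : ℝ × (ℝ × (ℝ × ℝ))) : Emap p 3 = p.1 := rfl

lemma Emap_mp : MeasurePreserving Emap := by
  have h1 := (EuclideanSpace.volume_preserving_symm_measurableEquiv_toLp (Fin 4)).symm
  have h2 := (volume_preserving_piFinSuccAbove (fun _ : Fin 4 => ℝ) 3).symm
  have h3 := (volume_preserving_piFinSuccAbove (fun _ : Fin 3 => ℝ) 2).symm
  have h4 := (volume_preserving_finTwoArrow ℝ).symm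
  have hid : MeasurePreserving (id : ℝ → ℝ) := MeasurePreserving.id _
  have hA : MeasurePreserving (Prod.map (id : ℝ → ℝ) (Prod.map (id : ℝ → ℝ)
      (MeasurableEquiv.finTwoArrow (α := ℝ)).symm)) := hid.prod (hid.prod h4)
  have hB : MeasurePreserving (Prod.map (id : ℝ → ℝ)
      (MeasurableEquiv.piFinSuccAbove (fun _ : Fin 3 => ℝ) 2).symm) := hid.prod h3
  have := ((h1.comp h2).comp hB).comp hA
  convert this using 1
  rfl

lemma Emap_pre (c : ℝ) : Emap ⁻¹' Pprime c = Sset c := by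
  ext ⟨t, z, x, y⟩
  simp only [mem_preimage, Pprime, Sset, S2, Ttri, mem_setOf_eq,
    Emap_zero, Emap_one, Emap_two, Emap_three]
  constructor
  · rintro ⟨h1, h2, h3, h4, h5, h6, h7⟩
    refine ⟨by linarith, by linarith, by linarith, by linarith, by linarith, by linarith,
      by linarith, by linarith⟩
  · rintro ⟨h1, h2, h3, h4, h5, h6, h7, h8⟩
    refine ⟨by linarith, by linarith, by linarith, by linarith, by linarith, by linarith,
      by linarith⟩

lemma transport (c : ℝ) (f : EuclideanSpace ℝ (Fin 4) → ℝ) :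
    ∫ y in Pprime c, f y = ∫ p in Sset c, f (Emap p) := by
  rw [← Emap_pre c]
  exact (Emap_mp.setIntegral_preimage_emb Emap.measurableEmbedding f _).symm

lemma cont_coord (i : Fin 4) : Continuous (fun y : EuclideanSpace ℝ (Fin 4) => y i) := by
  exact (continuous_apply i).comp (PiLp.continuousLinearEquiv 2 ℝ (fun _ : Fin 4 => ℝ)).continuous
lemma isClosed_Pprime (c : ℝ) : IsClosed (Pprime c) := by
  have h : Pprime c = {y : EuclideanSpace ℝ (Fin 4) | -y 0 - y 1 - 2 * y 3 ≤ 1/2} ∩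
      ({y | y 0 - 2 * y 3 ≤ 1/2} ∩ ({y | y 1 - 2 * y 3 ≤ 1/2} ∩
      ({y | -y 2 + 3 * y 3 ≤ c} ∩ ({y | y 2 + 3 * y 3 ≤ c} ∩
      ({y | 6 * y 3 ≤ 1/2} ∩ {y | -(6 * y 3) ≤ 1/2}))))) := rfl
  rw [h]
  have h0 := cont_coord 0; have h1 := cont_coord 1
  have h2 := cont_coord 2; have h3 := cont_coord 3
  repeat' apply IsClosed.inter
  all_goals apply isClosed_le <;> fun_prop

lemma compact_Pprime (c : ℝ) (hc : c ∈ Ioo (1/4 : ℝ) (3/4)) : IsCompact (Pprime c) := by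
  apply Metric.isCompact_of_isClosed_isBounded (isClosed_Pprime c)
  apply Bornology.IsBounded.subset (Metric.isBounded_closedBall (x := (0 : EuclideanSpace ℝ (Fin 4))) (r := 6))
  intro y hy
  obtain ⟨a1, a2, a3, a4, a5, a6, a7⟩ := hy
  rw [Metric.mem_closedBall, dist_zero_right, EuclideanSpace.norm_eq]
  have e0 : (y 0)^2 ≤ 9 := by nlinarith
  have e1 : (y 1)^2 ≤ 9 := by nlinarith
  have e2 : (y 2)^2 ≤ 9 := by nlinarith [hc.1, hc.2]
  have e3 : (y 3)^2 ≤ 9 := by nlinarith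
  have hsum : ∑ i : Fin 4, ‖y i‖^2 ≤ 36 := by
    rw [Fin.sum_univ_four]
    simp only [Real.norm_eq_abs, sq_abs]
    linarith
  calc Real.sqrt (∑ i : Fin 4, ‖y i‖^2) ≤ Real.sqrt 36 := Real.sqrt_le_sqrt hsum
    _ = 6 := by
        rw [show (36:ℝ) = 6^2 by norm_num, Real.sqrt_sq (by norm_num : (0:ℝ) ≤ 6)]

lemma convex_Pprime (c : ℝ) : Convex ℝ (Pprime c) := by
  rintro u hu v hv a b ha hb hab
  obtain ⟨u1, u2, u3, u4, u5, u6, u7⟩ := hu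
  obtain ⟨v1, v2, v3, v4, v5, v6, v7⟩ := hv
  have key : ∀ i : Fin 4, (a • u + b • v) i = a * u i + b * v i := fun i => by
    simp [PiLp.add_apply, PiLp.smul_apply, smul_eq_mul]
  refine ⟨?_, ?_, ?_, ?_, ?_, ?_, ?_⟩ <;> simp only [key]
  · nlinarith [mul_le_mul_of_nonneg_left u1 ha, mul_le_mul_of_nonneg_left v1 hb]
  · nlinarith [mul_le_mul_of_nonneg_left u2 ha, mul_le_mul_of_nonneg_left v2 hb]
  · nlinarith [mul_le_mul_of_nonneg_left u3 ha, mul_le_mul_of_nonneg_left v3 hb]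
  · nlinarith [mul_le_mul_of_nonneg_left u4 ha, mul_le_mul_of_nonneg_left v4 hb]
  · nlinarith [mul_le_mul_of_nonneg_left u5 ha, mul_le_mul_of_nonneg_left v5 hb]
  · nlinarith [mul_le_mul_of_nonneg_left u6 ha, mul_le_mul_of_nonneg_left v6 hb]
  · nlinarith [mul_le_mul_of_nonneg_left u7 ha, mul_le_mul_of_nonneg_left v7 hb]

lemma interior_Pprime (c : ℝ) (hc : c ∈ Ioo (1/4 : ℝ) (3/4)) :
    (interior (Pprime c)).Nonempty := by
  set U : Set (EuclideanSpace ℝ (Fin 4)) :=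
    {y | -y 0 - y 1 - 2 * y 3 < 1/2} ∩ ({y | y 0 - 2 * y 3 < 1/2} ∩ ({y | y 1 - 2 * y 3 < 1/2} ∩
      ({y | -y 2 + 3 * y 3 < c} ∩ ({y | y 2 + 3 * y 3 < c} ∩
      ({y | 6 * y 3 < 1/2} ∩ {y | -(6 * y 3) < 1/2}))))) with hUdef
  have h0 := cont_coord 0; have h1 := cont_coord 1
  have h2 := cont_coord 2; have h3 := cont_coord 3
  have hopen : IsOpen U := by
    rw [hUdef]
    repeat' apply IsOpen.inter
    all_goals apply isOpen_lt <;> fun_prop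
  have hsub : U ⊆ Pprime c := by
    rintro y ⟨g1, g2, g3, g4, g5, g6, g7⟩
    exact ⟨le_of_lt g1, le_of_lt g2, le_of_lt g3, le_of_lt g4, le_of_lt g5,
      le_of_lt g6, le_of_lt g7⟩
  have h0mem : (0 : EuclideanSpace ℝ (Fin 4)) ∈ U := by
    have hz : ∀ i : Fin 4, (0 : EuclideanSpace ℝ (Fin 4)) i = 0 := fun i => rfl
    refine ⟨?_, ?_, ?_, ?_, ?_, ?_, ?_⟩ <;>
      simp only [mem_setOf_eq, hz] <;> (try norm_num) <;> linarith [hc.1]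
  exact ⟨0, interior_maximal hsub hopen h0mem⟩

/-- Explicit volume, moment and symmetry computations for `P'(c)` from the
proof of Corollary 1.3. -/
theorem stmt14 (c : ℝ) (hc : c ∈ Set.Ioo (1/4 : ℝ) (3/4)) :
    IsCompact (Pprime c) ∧ Convex ℝ (Pprime c) ∧
      (interior (Pprime c)).Nonempty ∧
      (∫ y in Pprime c, (1 : ℝ)) = (56 * c - 3) / 144 ∧
      (∫ y in Pprime c, y 3) = (5 * c - 2) / 720 ∧
      (∫ y in Pprime c, y 0) = 0 ∧
      (∫ y in Pprime c, y 1) = 0 ∧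
      (∫ y in Pprime c, y 2) = 0 := by
  refine ⟨compact_Pprime c hc, convex_Pprime c, interior_Pprime c hc, ?_, ?_, ?_, ?_, ?_⟩
  · rw [transport c (fun _ => 1)]
    have := vol_Sset c hc.1
    linarith [this]
  · rw [transport c (fun y => y 3)]
    exact momt_Sset c hc.1
  · rw [transport c (fun y => y 0)]
    exact momx_Sset c hc.1
  · rw [transport c (fun y => y 1)]
    exact momy_Sset c hc.1
  · rw [transport c (fun y => y 2)]
    exact momz_Sset c hc.1
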